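/- Let C be a k-coalgebra, σ : C ⊗ C → k a strong D-map, and (M, ρ) a right C-comodule. Then the map R_σ : M ⊗ M → M ⊗ M defined by R_σ(m ⊗ n) = ∑ σ(m₍₁₎ ⊗ n₍₁₎) m₍₀₎ ⊗ n₍₀₎ is a solution of the Long equation. -/
import Mathlib


open TensorProduct

noncomputable section

variable {k M : Type*} [Field k] [AddCommGroup M] [Module k M]

/-- The flip map τ : M ⊗ M → M ⊗ M, τ(m ⊗ n) = n ⊗ m. -/
def tau (k M : Type*) [Field k] [AddCommGroup M] [Module k M] :
    M ⊗[k] M →ₗ[k] M ⊗[k] M := (TensorProduct.comm k M M).toLinearMap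

/-- R¹² = R ⊗ id on M ⊗ (M ⊗ M) (transported along the associator). -/
def R12 (R : M ⊗[k] M →ₗ[k] M ⊗[k] M) :
    M ⊗[k] (M ⊗[k] M) →ₗ[k] M ⊗[k] (M ⊗[k] M) :=
  (TensorProduct.assoc k M M M).toLinearMap ∘ₗ
    TensorProduct.map R LinearMap.id ∘ₗ (TensorProduct.assoc k M M M).symm.toLinearMap

/-- R²³ = id ⊗ R on M ⊗ (M ⊗ M). -/
def R23 (R : M ⊗[k] M →ₗ[k] M ⊗[k] M) :
    M ⊗[k] (M ⊗[k] M) →ₗ[k] M ⊗[k] (M ⊗[k] M) :=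
  TensorProduct.map LinearMap.id R

/-- R¹³ = (id ⊗ τ)(R ⊗ id)(id ⊗ τ) on M ⊗ (M ⊗ M). -/
def R13 (R : M ⊗[k] M →ₗ[k] M ⊗[k] M) :
    M ⊗[k] (M ⊗[k] M) →ₗ[k] M ⊗[k] (M ⊗[k] M) :=
  TensorProduct.map LinearMap.id (tau k M) ∘ₗ R12 R ∘ₗ
    TensorProduct.map LinearMap.id (tau k M)

/-- R is a solution of the Long equation: R¹²R¹³ = R¹³R¹² and R¹²R²³ = R²³R¹². -/
def IsLongSolution (R : M ⊗[k] M →ₗ[k] M ⊗[k] M) : Prop :=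
  R12 R ∘ₗ R13 R = R13 R ∘ₗ R12 R ∧ R12 R ∘ₗ R23 R = R23 R ∘ₗ R12 R

end

noncomputable section

open Coalgebra

variable {k : Type*} [Field k] {C : Type*} [AddCommGroup C] [Module k C] [Coalgebra k C]

/-- The map C ⊗ C → C, c ⊗ d ↦ ∑ σ(c₍₁₎ ⊗ d) c₍₂₎. -/
def sweedL (k : Type*) [Field k] (C : Type*) [AddCommGroup C] [Module k C] [Coalgebra k C]
    (σ : C ⊗[k] C →ₗ[k] k) : C ⊗[k] C →ₗ[k] C :=
  (TensorProduct.rid k C).toLinearMap ∘ₗ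
    TensorProduct.map LinearMap.id σ ∘ₗ
    (TensorProduct.assoc k C C C).toLinearMap ∘ₗ
    TensorProduct.map ((TensorProduct.comm k C C).toLinearMap ∘ₗ comul) LinearMap.id

/-- The map C ⊗ C → C, c ⊗ d ↦ ∑ σ(c₍₂₎ ⊗ d) c₍₁₎. -/
def sweedR (k : Type*) [Field k] (C : Type*) [AddCommGroup C] [Module k C] [Coalgebra k C]
    (σ : C ⊗[k] C →ₗ[k] k) : C ⊗[k] C →ₗ[k] C :=
  (TensorProduct.rid k C).toLinearMap ∘ₗ
    TensorProduct.map LinearMap.id σ ∘ₗ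
    (TensorProduct.assoc k C C C).toLinearMap ∘ₗ
    TensorProduct.map comul LinearMap.id

/-- σ is a strong D-map: ∑ σ(c₍₁₎ ⊗ d) c₍₂₎ = ∑ σ(c₍₂₎ ⊗ d) c₍₁₎ for all c, d. -/
def IsStrongDMap (σ : C ⊗[k] C →ₗ[k] k) : Prop :=
  sweedL k C σ = sweedR k C σ

variable {M : Type*} [AddCommGroup M] [Module k M]

/-- Coassociativity of a right comodule structure map ρ : M → M ⊗ C. -/
def IsCoassoc (ρ : M →ₗ[k] M ⊗[k] C) : Prop :=
  TensorProduct.map LinearMap.id comul ∘ₗ ρ =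
    (TensorProduct.assoc k M C C).toLinearMap ∘ₗ TensorProduct.map ρ LinearMap.id ∘ₗ ρ

/-- Counitality of a right comodule structure map ρ : M → M ⊗ C. -/
def IsCounital (ρ : M →ₗ[k] M ⊗[k] C) : Prop :=
  (TensorProduct.rid k M).toLinearMap ∘ₗ TensorProduct.map LinearMap.id counit ∘ₗ ρ =
    LinearMap.id

/-- R_σ : M ⊗ M → M ⊗ M, m ⊗ n ↦ ∑ σ(m₍₁₎ ⊗ n₍₁₎) m₍₀₎ ⊗ n₍₀₎. -/
def Rsigma (ρ : M →ₗ[k] M ⊗[k] C) (σ : C ⊗[k] C →ₗ[k] k) :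
    M ⊗[k] M →ₗ[k] M ⊗[k] M :=
  (TensorProduct.rid k (M ⊗[k] M)).toLinearMap ∘ₗ
    TensorProduct.map LinearMap.id σ ∘ₗ
    (TensorProduct.tensorTensorTensorComm k M C M C).toLinearMap ∘ₗ
    TensorProduct.map ρ ρ

end

open TensorProduct Coalgebra

noncomputable section Aux

variable {k : Type*} [Field k] {C : Type*} [AddCommGroup C] [Module k C] [Coalgebra k C]
variable {M : Type*} [AddCommGroup M] [Module k M]

/-- K : (C⊗C)⊗C → C, (c⊗d)⊗e ↦ σ(d⊗e) • c -/
def Kmap (σ : C ⊗[k] C →ₗ[k] k) : (C ⊗[k] C) ⊗[k] C →ₗ[k] C :=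
  (TensorProduct.rid k C).toLinearMap ∘ₗ
    TensorProduct.map LinearMap.id σ ∘ₗ (TensorProduct.assoc k C C C).toLinearMap

def Kmap' (σ : C ⊗[k] C →ₗ[k] k) : (C ⊗[k] C) ⊗[k] C →ₗ[k] C :=
  Kmap σ ∘ₗ TensorProduct.map (TensorProduct.comm k C C).toLinearMap LinearMap.id

@[simp] lemma Kmap_tmul (σ : C ⊗[k] C →ₗ[k] k) (c d e : C) :
    Kmap σ ((c ⊗ₜ[k] d) ⊗ₜ[k] e) = σ (d ⊗ₜ[k] e) • c := by
  simp [Kmap]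

@[simp] lemma Kmap'_tmul (σ : C ⊗[k] C →ₗ[k] k) (c d e : C) :
    Kmap' σ ((c ⊗ₜ[k] d) ⊗ₜ[k] e) = σ (c ⊗ₜ[k] e) • d := by
  simp [Kmap']

lemma sweedR_eq (σ : C ⊗[k] C →ₗ[k] k) :
    sweedR k C σ = Kmap σ ∘ₗ TensorProduct.map comul LinearMap.id := by
  rfl

lemma sweedL_eq (σ : C ⊗[k] C →ₗ[k] k) :
    sweedL k C σ = Kmap' σ ∘ₗ TensorProduct.map comul LinearMap.id := by
  ext c d
  simp [sweedL, Kmap', Kmap]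

/-- contraction: (M⊗C)⊗(M⊗C) → M⊗M -/
def con (σ : C ⊗[k] C →ₗ[k] k) : (M ⊗[k] C) ⊗[k] (M ⊗[k] C) →ₗ[k] M ⊗[k] M :=
  (TensorProduct.rid k (M ⊗[k] M)).toLinearMap ∘ₗ
    TensorProduct.map LinearMap.id σ ∘ₗ
    (TensorProduct.tensorTensorTensorComm k M C M C).toLinearMap

@[simp] lemma con_tmul (σ : C ⊗[k] C →ₗ[k] k) (m n : M) (a c : C) :
    con σ ((m ⊗ₜ[k] a) ⊗ₜ[k] (n ⊗ₜ[k] c)) = σ (a ⊗ₜ[k] c) • (m ⊗ₜ[k] n) := by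
  simp [con]

lemma Rsigma_tmul (ρ : M →ₗ[k] M ⊗[k] C) (σ : C ⊗[k] C →ₗ[k] k) (m n : M) :
    Rsigma ρ σ (m ⊗ₜ[k] n) = con σ (ρ m ⊗ₜ[k] ρ n) := by
  simp [Rsigma, con]

/-- Φ s : (M⊗C)⊗((M⊗C)⊗(M⊗C)) → M⊗(M⊗M), (m⊗a)⊗((n⊗c)⊗(p⊗b)) ↦ σ(a ⊗ s(c⊗b)) • (m⊗(n⊗p)) -/
def Phi (σ : C ⊗[k] C →ₗ[k] k) (s : C ⊗[k] C →ₗ[k] C) :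
    (M ⊗[k] C) ⊗[k] ((M ⊗[k] C) ⊗[k] (M ⊗[k] C)) →ₗ[k] M ⊗[k] (M ⊗[k] M) :=
  (TensorProduct.rid k (M ⊗[k] (M ⊗[k] M))).toLinearMap ∘ₗ
    TensorProduct.map LinearMap.id σ ∘ₗ
    (TensorProduct.tensorTensorTensorComm k M C (M ⊗[k] M) C).toLinearMap ∘ₗ
    TensorProduct.map LinearMap.id
      (TensorProduct.map LinearMap.id s ∘ₗ
        (TensorProduct.tensorTensorTensorComm k M C M C).toLinearMap)

@[simp] lemma Phi_tmul (σ : C ⊗[k] C →ₗ[k] k) (s : C ⊗[k] C →ₗ[k] C)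
    (m n p : M) (a c b : C) :
    Phi σ s ((m ⊗ₜ[k] a) ⊗ₜ[k] ((n ⊗ₜ[k] c) ⊗ₜ[k] (p ⊗ₜ[k] b))) =
      σ (a ⊗ₜ[k] s (c ⊗ₜ[k] b)) • (m ⊗ₜ[k] (n ⊗ₜ[k] p)) := by
  simp [Phi]

/-- Ξ J : (M⊗C)⊗(((M⊗C)⊗C)⊗(M⊗C)) → M⊗(M⊗M),
  (m⊗a)⊗(((n⊗c')⊗c)⊗(p⊗b)) ↦ σ(a ⊗ J((c'⊗c)⊗b)) • (m⊗(n⊗p)) -/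
def Xi (σ : C ⊗[k] C →ₗ[k] k) (J : (C ⊗[k] C) ⊗[k] C →ₗ[k] C) :
    (M ⊗[k] C) ⊗[k] (((M ⊗[k] C) ⊗[k] C) ⊗[k] (M ⊗[k] C)) →ₗ[k] M ⊗[k] (M ⊗[k] M) :=
  (TensorProduct.rid k (M ⊗[k] (M ⊗[k] M))).toLinearMap ∘ₗ
    TensorProduct.map LinearMap.id σ ∘ₗ
    (TensorProduct.tensorTensorTensorComm k M C (M ⊗[k] M) C).toLinearMap ∘ₗ
    TensorProduct.map LinearMap.id
      (TensorProduct.map LinearMap.id J ∘ₗ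
        (TensorProduct.tensorTensorTensorComm k M (C ⊗[k] C) M C).toLinearMap ∘ₗ
        TensorProduct.map (TensorProduct.assoc k M C C).toLinearMap LinearMap.id)

@[simp] lemma Xi_tmul (σ : C ⊗[k] C →ₗ[k] k) (J : (C ⊗[k] C) ⊗[k] C →ₗ[k] C)
    (m n p : M) (a c' c b : C) :
    Xi σ J ((m ⊗ₜ[k] a) ⊗ₜ[k] (((n ⊗ₜ[k] c') ⊗ₜ[k] c) ⊗ₜ[k] (p ⊗ₜ[k] b))) =
      σ (a ⊗ₜ[k] J ((c' ⊗ₜ[k] c) ⊗ₜ[k] b)) • (m ⊗ₜ[k] (n ⊗ₜ[k] p)) := by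
  simp [Xi]

/-- Θ' s : (M⊗C)⊗((M⊗C)⊗(M⊗C)) → M⊗(M⊗M),
  (m⊗a)⊗((n⊗c)⊗(p⊗b)) ↦ σ(s(a⊗c) ⊗ b) • (m⊗(n⊗p)) -/
def Theta' (σ : C ⊗[k] C →ₗ[k] k) (s : C ⊗[k] C →ₗ[k] C) :
    (M ⊗[k] C) ⊗[k] ((M ⊗[k] C) ⊗[k] (M ⊗[k] C)) →ₗ[k] M ⊗[k] (M ⊗[k] M) :=
  (TensorProduct.rid k (M ⊗[k] (M ⊗[k] M))).toLinearMap ∘ₗ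
    TensorProduct.map LinearMap.id
      (σ ∘ₗ TensorProduct.map s LinearMap.id ∘ₗ (TensorProduct.assoc k C C C).symm.toLinearMap) ∘ₗ
    (TensorProduct.tensorTensorTensorComm k M C (M ⊗[k] M) (C ⊗[k] C)).toLinearMap ∘ₗ
    TensorProduct.map LinearMap.id (TensorProduct.tensorTensorTensorComm k M C M C).toLinearMap

@[simp] lemma Theta'_tmul (σ : C ⊗[k] C →ₗ[k] k) (s : C ⊗[k] C →ₗ[k] C)
    (m n p : M) (a c b : C) :
    Theta' σ s ((m ⊗ₜ[k] a) ⊗ₜ[k] ((n ⊗ₜ[k] c) ⊗ₜ[k] (p ⊗ₜ[k] b))) =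
      σ (s (a ⊗ₜ[k] c) ⊗ₜ[k] b) • (m ⊗ₜ[k] (n ⊗ₜ[k] p)) := by
  simp [Theta']

/-- Θ J : ((M⊗C)⊗C)⊗((M⊗C)⊗(M⊗C)) → M⊗(M⊗M),
  ((m⊗a')⊗a)⊗((n⊗c)⊗(p⊗b)) ↦ σ(J((a'⊗a)⊗c) ⊗ b) • (m⊗(n⊗p)) -/
def Theta (σ : C ⊗[k] C →ₗ[k] k) (J : (C ⊗[k] C) ⊗[k] C →ₗ[k] C) :
    ((M ⊗[k] C) ⊗[k] C) ⊗[k] ((M ⊗[k] C) ⊗[k] (M ⊗[k] C)) →ₗ[k] M ⊗[k] (M ⊗[k] M) :=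
  (TensorProduct.rid k (M ⊗[k] (M ⊗[k] M))).toLinearMap ∘ₗ
    TensorProduct.map LinearMap.id
      (σ ∘ₗ TensorProduct.map J LinearMap.id ∘ₗ
        (TensorProduct.assoc k (C ⊗[k] C) C C).symm.toLinearMap) ∘ₗ
    (TensorProduct.tensorTensorTensorComm k M (C ⊗[k] C) (M ⊗[k] M) (C ⊗[k] C)).toLinearMap ∘ₗ
    TensorProduct.map (TensorProduct.assoc k M C C).toLinearMap
      (TensorProduct.tensorTensorTensorComm k M C M C).toLinearMap

@[simp] lemma Theta_tmul (σ : C ⊗[k] C →ₗ[k] k) (J : (C ⊗[k] C) ⊗[k] C →ₗ[k] C)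
    (m n p : M) (a' a c b : C) :
    Theta σ J (((m ⊗ₜ[k] a') ⊗ₜ[k] a) ⊗ₜ[k] ((n ⊗ₜ[k] c) ⊗ₜ[k] (p ⊗ₜ[k] b))) =
      σ (J ((a' ⊗ₜ[k] a) ⊗ₜ[k] c) ⊗ₜ[k] b) • (m ⊗ₜ[k] (n ⊗ₜ[k] p)) := by
  simp [Theta]

end Aux

set_option linter.unusedSectionVars false
set_option maxHeartbeats 1000000

noncomputable section Aux2

variable {k : Type*} [Field k] {C : Type*} [AddCommGroup C] [Module k C] [Coalgebra k C]
variable {M : Type*} [AddCommGroup M] [Module k M]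

open Coalgebra


@[simp] lemma apply_smul_tmul {A B P : Type*} [AddCommGroup A] [AddCommGroup B] [AddCommGroup P]
    [Module k A] [Module k B] [Module k P] (f : A ⊗[k] B →ₗ[k] P) (s : k) (x : A) (y : B) :
    f ((s • x) ⊗ₜ[k] y) = s • f (x ⊗ₜ[k] y) := by
  rw [TensorProduct.smul_tmul, TensorProduct.tmul_smul, map_smul]

@[simp] lemma apply_tmul_smul {A B P : Type*} [AddCommGroup A] [AddCommGroup B] [AddCommGroup P]
    [Module k A] [Module k B] [Module k P] (f : A ⊗[k] B →ₗ[k] P) (s : k) (x : A) (y : B) :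
    f (x ⊗ₜ[k] (s • y)) = s • f (x ⊗ₜ[k] y) := by
  rw [TensorProduct.tmul_smul, map_smul]

lemma R12_pure (R : M ⊗[k] M →ₗ[k] M ⊗[k] M) (m n p : M) :
    R12 R (m ⊗ₜ[k] (n ⊗ₜ[k] p)) = (TensorProduct.assoc k M M M) (R (m ⊗ₜ[k] n) ⊗ₜ[k] p) := by
  simp [R12]

lemma R23_pure (R : M ⊗[k] M →ₗ[k] M ⊗[k] M) (m : M) (w : M ⊗[k] M) :
    R23 R (m ⊗ₜ[k] w) = m ⊗ₜ[k] R w := by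
  simp [R23]

lemma R13_pure (R : M ⊗[k] M →ₗ[k] M ⊗[k] M) (m n p : M) :
    R13 R (m ⊗ₜ[k] (n ⊗ₜ[k] p)) =
      TensorProduct.map LinearMap.id (tau k M)
        ((TensorProduct.assoc k M M M) (R (m ⊗ₜ[k] p) ⊗ₜ[k] n)) := by
  simp [R13, tau, R12_pure]

lemma claimA2 (σ : C ⊗[k] C →ₗ[k] k) (ρ : M →ₗ[k] M ⊗[k] C) :
    R12 (Rsigma ρ σ) ∘ₗ R23 (Rsigma ρ σ) =
      Xi σ (Kmap σ) ∘ₗ TensorProduct.map ρ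
        (TensorProduct.map (TensorProduct.map ρ LinearMap.id ∘ₗ ρ) ρ) := by
  ext m n p
  simp only [TensorProduct.AlgebraTensorModule.curry_apply, TensorProduct.curry_apply,
    LinearMap.coe_restrictScalars, LinearMap.compr₂_apply, TensorProduct.mk_apply,
    LinearMap.comp_apply, TensorProduct.map_tmul, R23_pure, Rsigma_tmul]
  suffices h : ∀ (x y : M ⊗[k] C),
      R12 (Rsigma ρ σ) (m ⊗ₜ[k] con σ (x ⊗ₜ[k] y)) =
      Xi σ (Kmap σ) (ρ m ⊗ₜ[k] ((TensorProduct.map ρ LinearMap.id x) ⊗ₜ[k] y)) from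
    h (ρ n) (ρ p)
  intro x y
  induction x using TensorProduct.induction_on with
  | zero => simp
  | add x₁ x₂ h₁ h₂ => simp [TensorProduct.add_tmul, TensorProduct.tmul_add, h₁, h₂]
  | tmul n' c =>
    induction y using TensorProduct.induction_on with
    | zero => simp
    | add y₁ y₂ h₁ h₂ => simp [TensorProduct.add_tmul, TensorProduct.tmul_add, h₁, h₂]
    | tmul p' b =>
      rw [con_tmul, TensorProduct.tmul_smul, map_smul, R12_pure, Rsigma_tmul]
      simp only [TensorProduct.map_tmul, LinearMap.id_coe, id_eq]
      generalize ρ m = u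
      generalize ρ n' = w
      induction u using TensorProduct.induction_on with
      | zero => simp
      | add u₁ u₂ h₁ h₂ => simp [TensorProduct.add_tmul, TensorProduct.tmul_add, h₁, h₂]
      | tmul m' a =>
        induction w using TensorProduct.induction_on with
        | zero => simp
        | add w₁ w₂ h₁ h₂ => simp [TensorProduct.add_tmul, TensorProduct.tmul_add, h₁, h₂]
        | tmul n'' c' =>
          simp [con_tmul, Xi_tmul, Kmap_tmul, TensorProduct.smul_tmul, TensorProduct.tmul_smul,
            smul_smul, smul_eq_mul, mul_comm, mul_assoc, mul_left_comm]

lemma claimB2 (σ : C ⊗[k] C →ₗ[k] k) (ρ : M →ₗ[k] M ⊗[k] C) :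
    R23 (Rsigma ρ σ) ∘ₗ R12 (Rsigma ρ σ) =
      Xi σ (Kmap' σ) ∘ₗ TensorProduct.map ρ
        (TensorProduct.map (TensorProduct.map ρ LinearMap.id ∘ₗ ρ) ρ) := by
  ext m n p
  simp only [TensorProduct.AlgebraTensorModule.curry_apply, TensorProduct.curry_apply,
    LinearMap.coe_restrictScalars, LinearMap.compr₂_apply, TensorProduct.mk_apply,
    LinearMap.comp_apply, TensorProduct.map_tmul, R12_pure, Rsigma_tmul]
  suffices h : ∀ (u x : M ⊗[k] C),
      R23 (Rsigma ρ σ) ((TensorProduct.assoc k M M M) (con σ (u ⊗ₜ[k] x) ⊗ₜ[k] p)) =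
      Xi σ (Kmap' σ) (u ⊗ₜ[k] ((TensorProduct.map ρ LinearMap.id x) ⊗ₜ[k] ρ p)) from
    h (ρ m) (ρ n)
  intro u x
  induction u using TensorProduct.induction_on with
  | zero => simp
  | add u₁ u₂ h₁ h₂ => simp [TensorProduct.add_tmul, TensorProduct.tmul_add, h₁, h₂]
  | tmul m' a =>
    induction x using TensorProduct.induction_on with
    | zero => simp
    | add x₁ x₂ h₁ h₂ => simp [TensorProduct.add_tmul, TensorProduct.tmul_add, h₁, h₂]
    | tmul n' c =>
      simp only [con_tmul, TensorProduct.smul_tmul, TensorProduct.tmul_smul, map_smul,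
        TensorProduct.assoc_tmul, R23_pure, Rsigma_tmul, TensorProduct.map_tmul,
        LinearMap.id_coe, id_eq]
      generalize ρ n' = w
      generalize ρ p = y
      induction w using TensorProduct.induction_on with
      | zero => simp
      | add w₁ w₂ h₁ h₂ => simp [TensorProduct.add_tmul, TensorProduct.tmul_add, h₁, h₂]
      | tmul n'' c' =>
        induction y using TensorProduct.induction_on with
        | zero => simp
        | add y₁ y₂ h₁ h₂ => simp [TensorProduct.add_tmul, TensorProduct.tmul_add, h₁, h₂]
        | tmul p' b =>
          simp [con_tmul, Xi_tmul, Kmap'_tmul, TensorProduct.smul_tmul, TensorProduct.tmul_smul,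
            smul_smul, smul_eq_mul, mul_comm, mul_assoc, mul_left_comm]

lemma claimA1 (σ : C ⊗[k] C →ₗ[k] k) (ρ : M →ₗ[k] M ⊗[k] C) :
    R12 (Rsigma ρ σ) ∘ₗ R13 (Rsigma ρ σ) =
      Theta σ (Kmap' σ) ∘ₗ TensorProduct.map (TensorProduct.map ρ LinearMap.id ∘ₗ ρ)
        (TensorProduct.map ρ ρ) := by
  ext m n p
  simp only [TensorProduct.AlgebraTensorModule.curry_apply, TensorProduct.curry_apply,
    LinearMap.coe_restrictScalars, LinearMap.compr₂_apply, TensorProduct.mk_apply,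
    LinearMap.comp_apply, TensorProduct.map_tmul, R13_pure, Rsigma_tmul]
  suffices h : ∀ (X y : M ⊗[k] C),
      R12 (Rsigma ρ σ) (TensorProduct.map LinearMap.id (tau k M)
          ((TensorProduct.assoc k M M M) (con σ (X ⊗ₜ[k] y) ⊗ₜ[k] n))) =
      Theta σ (Kmap' σ) ((TensorProduct.map ρ LinearMap.id X) ⊗ₜ[k] (ρ n ⊗ₜ[k] y)) from
    h (ρ m) (ρ p)
  intro X y
  induction X using TensorProduct.induction_on with
  | zero => simp
  | add X₁ X₂ h₁ h₂ => simp [TensorProduct.add_tmul, TensorProduct.tmul_add, h₁, h₂]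
  | tmul m' a =>
    induction y using TensorProduct.induction_on with
    | zero => simp
    | add y₁ y₂ h₁ h₂ => simp [TensorProduct.add_tmul, TensorProduct.tmul_add, h₁, h₂]
    | tmul p' b =>
      simp only [con_tmul, TensorProduct.smul_tmul, TensorProduct.tmul_smul, map_smul,
        TensorProduct.assoc_tmul, TensorProduct.map_tmul, LinearMap.id_coe, id_eq, tau,
        LinearEquiv.coe_coe, TensorProduct.comm_tmul, R12_pure, Rsigma_tmul]
      generalize ρ m' = u
      generalize ρ n = z
      induction u using TensorProduct.induction_on with
      | zero => simp
      | add u₁ u₂ h₁ h₂ => simp [TensorProduct.add_tmul, TensorProduct.tmul_add, h₁, h₂]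
      | tmul m'' a' =>
        induction z using TensorProduct.induction_on with
        | zero => simp
        | add z₁ z₂ h₁ h₂ => simp [TensorProduct.add_tmul, TensorProduct.tmul_add, h₁, h₂]
        | tmul n' c =>
          simp [con_tmul, Theta_tmul, Kmap'_tmul, TensorProduct.smul_tmul, TensorProduct.tmul_smul,
            smul_smul, smul_eq_mul, mul_comm, mul_assoc, mul_left_comm]

lemma claimB1 (σ : C ⊗[k] C →ₗ[k] k) (ρ : M →ₗ[k] M ⊗[k] C) :
    R13 (Rsigma ρ σ) ∘ₗ R12 (Rsigma ρ σ) =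
      Theta σ (Kmap σ) ∘ₗ TensorProduct.map (TensorProduct.map ρ LinearMap.id ∘ₗ ρ)
        (TensorProduct.map ρ ρ) := by
  ext m n p
  simp only [TensorProduct.AlgebraTensorModule.curry_apply, TensorProduct.curry_apply,
    LinearMap.coe_restrictScalars, LinearMap.compr₂_apply, TensorProduct.mk_apply,
    LinearMap.comp_apply, TensorProduct.map_tmul, R12_pure, Rsigma_tmul]
  suffices h : ∀ (X z : M ⊗[k] C),
      R13 (Rsigma ρ σ) ((TensorProduct.assoc k M M M) (con σ (X ⊗ₜ[k] z) ⊗ₜ[k] p)) =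
      Theta σ (Kmap σ) ((TensorProduct.map ρ LinearMap.id X) ⊗ₜ[k] (z ⊗ₜ[k] ρ p)) from
    h (ρ m) (ρ n)
  intro X z
  induction X using TensorProduct.induction_on with
  | zero => simp
  | add X₁ X₂ h₁ h₂ => simp [TensorProduct.add_tmul, TensorProduct.tmul_add, h₁, h₂]
  | tmul m' a =>
    induction z using TensorProduct.induction_on with
    | zero => simp
    | add z₁ z₂ h₁ h₂ => simp [TensorProduct.add_tmul, TensorProduct.tmul_add, h₁, h₂]
    | tmul n' c =>
      simp only [con_tmul, TensorProduct.smul_tmul, TensorProduct.tmul_smul, map_smul,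
        TensorProduct.assoc_tmul, R13_pure, Rsigma_tmul, TensorProduct.map_tmul,
        LinearMap.id_coe, id_eq]
      generalize ρ m' = u
      generalize ρ p = y
      induction u using TensorProduct.induction_on with
      | zero => simp
      | add u₁ u₂ h₁ h₂ => simp [TensorProduct.add_tmul, TensorProduct.tmul_add, h₁, h₂]
      | tmul m'' a' =>
        induction y using TensorProduct.induction_on with
        | zero => simp
        | add y₁ y₂ h₁ h₂ => simp [TensorProduct.add_tmul, TensorProduct.tmul_add, h₁, h₂]
        | tmul p' b =>
          simp [con_tmul, Theta_tmul, Kmap_tmul, tau, TensorProduct.smul_tmul,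
            TensorProduct.tmul_smul, smul_smul, smul_eq_mul, mul_comm, mul_assoc,
            mul_left_comm, TensorProduct.assoc_tmul, LinearEquiv.coe_coe,
            TensorProduct.comm_tmul, R12_pure]

lemma bridge2 (σ : C ⊗[k] C →ₗ[k] k) (ρ : M →ₗ[k] M ⊗[k] C) (J : (C ⊗[k] C) ⊗[k] C →ₗ[k] C) :
    Xi σ J ∘ₗ TensorProduct.map ρ
        (TensorProduct.map ((TensorProduct.assoc k M C C).symm.toLinearMap ∘ₗ
          TensorProduct.map LinearMap.id comul ∘ₗ ρ) ρ) =
      Phi σ (J ∘ₗ TensorProduct.map comul LinearMap.id) ∘ₗ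
        TensorProduct.map ρ (TensorProduct.map ρ ρ) := by
  ext m n p
  simp only [TensorProduct.AlgebraTensorModule.curry_apply, TensorProduct.curry_apply,
    LinearMap.coe_restrictScalars, LinearMap.compr₂_apply, TensorProduct.mk_apply,
    LinearMap.comp_apply, TensorProduct.map_tmul]
  suffices h : ∀ (u x y : M ⊗[k] C),
      Xi σ J (u ⊗ₜ[k]
        (((TensorProduct.assoc k M C C).symm ((TensorProduct.map LinearMap.id comul) x)) ⊗ₜ[k] y)) =
      Phi σ (J ∘ₗ TensorProduct.map comul LinearMap.id) (u ⊗ₜ[k] (x ⊗ₜ[k] y)) by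
    simpa using h (ρ m) (ρ n) (ρ p)
  intro u x y
  induction x using TensorProduct.induction_on with
  | zero => simp
  | add x₁ x₂ h₁ h₂ => simp [TensorProduct.add_tmul, TensorProduct.tmul_add, h₁, h₂]
  | tmul n' c =>
    simp only [TensorProduct.map_tmul, LinearMap.id_coe, id_eq]
    induction u using TensorProduct.induction_on with
    | zero => simp
    | add u₁ u₂ h₁ h₂ => simp [TensorProduct.add_tmul, TensorProduct.tmul_add, h₁, h₂]
    | tmul m' a =>
      induction y using TensorProduct.induction_on with
      | zero => simp
      | add y₁ y₂ h₁ h₂ => simp [TensorProduct.add_tmul, TensorProduct.tmul_add, h₁, h₂]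
      | tmul p' b =>
        simp only [TensorProduct.map_tmul, LinearMap.id_coe, id_eq, Phi_tmul,
          LinearMap.comp_apply]
        generalize comul (R := k) c = z
        induction z using TensorProduct.induction_on with
        | zero => simp
        | add z₁ z₂ h₁ h₂ =>
          simp [TensorProduct.add_tmul, TensorProduct.tmul_add, add_smul, h₁, h₂]
        | tmul c₁ c₂ =>
          simp [TensorProduct.assoc_symm_tmul, Xi_tmul]

lemma bridge1 (σ : C ⊗[k] C →ₗ[k] k) (ρ : M →ₗ[k] M ⊗[k] C) (J : (C ⊗[k] C) ⊗[k] C →ₗ[k] C) :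
    Theta σ J ∘ₗ TensorProduct.map ((TensorProduct.assoc k M C C).symm.toLinearMap ∘ₗ
          TensorProduct.map LinearMap.id comul ∘ₗ ρ)
        (TensorProduct.map ρ ρ) =
      Theta' σ (J ∘ₗ TensorProduct.map comul LinearMap.id) ∘ₗ
        TensorProduct.map ρ (TensorProduct.map ρ ρ) := by
  ext m n p
  simp only [TensorProduct.AlgebraTensorModule.curry_apply, TensorProduct.curry_apply,
    LinearMap.coe_restrictScalars, LinearMap.compr₂_apply, TensorProduct.mk_apply,
    LinearMap.comp_apply, TensorProduct.map_tmul]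
  suffices h : ∀ (x u y : M ⊗[k] C),
      Theta σ J
        (((TensorProduct.assoc k M C C).symm ((TensorProduct.map LinearMap.id comul) x)) ⊗ₜ[k]
          (u ⊗ₜ[k] y)) =
      Theta' σ (J ∘ₗ TensorProduct.map comul LinearMap.id) (x ⊗ₜ[k] (u ⊗ₜ[k] y)) by
    simpa using h (ρ m) (ρ n) (ρ p)
  intro x u y
  induction x using TensorProduct.induction_on with
  | zero => simp
  | add x₁ x₂ h₁ h₂ => simp [TensorProduct.add_tmul, TensorProduct.tmul_add, h₁, h₂]
  | tmul m' a =>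
    simp only [TensorProduct.map_tmul, LinearMap.id_coe, id_eq]
    induction u using TensorProduct.induction_on with
    | zero => simp
    | add u₁ u₂ h₁ h₂ => simp [TensorProduct.add_tmul, TensorProduct.tmul_add, h₁, h₂]
    | tmul n' c =>
      induction y using TensorProduct.induction_on with
      | zero => simp
      | add y₁ y₂ h₁ h₂ => simp [TensorProduct.add_tmul, TensorProduct.tmul_add, h₁, h₂]
      | tmul p' b =>
        simp only [TensorProduct.map_tmul, LinearMap.id_coe, id_eq, Theta'_tmul,
          LinearMap.comp_apply]
        generalize comul (R := k) a = z
        induction z using TensorProduct.induction_on with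
        | zero => simp
        | add z₁ z₂ h₁ h₂ =>
          simp [TensorProduct.add_tmul, TensorProduct.tmul_add, add_smul, h₁, h₂]
        | tmul a₁ a₂ =>
          simp [TensorProduct.assoc_symm_tmul, Theta_tmul]

end Aux2

theorem Rsigma_isLongSolution
    {k : Type*} [Field k] {C : Type*} [AddCommGroup C] [Module k C] [Coalgebra k C]
    {M : Type*} [AddCommGroup M] [Module k M]
    (σ : C ⊗[k] C →ₗ[k] k) (hσ : IsStrongDMap σ)
    (ρ : M →ₗ[k] M ⊗[k] C) (hcoassoc : IsCoassoc ρ) (hcounit : IsCounital ρ) :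
    IsLongSolution (Rsigma ρ σ) := by
  unfold IsStrongDMap at hσ
  unfold IsCoassoc at hcoassoc
  have h2 : TensorProduct.map ρ LinearMap.id ∘ₗ ρ =
      (TensorProduct.assoc k M C C).symm.toLinearMap ∘ₗ
        TensorProduct.map LinearMap.id Coalgebra.comul ∘ₗ ρ := by
    apply LinearMap.ext
    intro m
    have := LinearMap.congr_fun hcoassoc m
    simp only [LinearMap.comp_apply, LinearEquiv.coe_coe] at this ⊢
    rw [this, LinearEquiv.symm_apply_apply]
  constructor
  · rw [claimA1 σ ρ, claimB1 σ ρ, h2, bridge1 σ ρ (Kmap' σ), bridge1 σ ρ (Kmap σ),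
      ← sweedL_eq, ← sweedR_eq, hσ]
  · rw [claimA2 σ ρ, claimB2 σ ρ, h2, bridge2 σ ρ (Kmap σ), bridge2 σ ρ (Kmap' σ),
      ← sweedR_eq, ← sweedL_eq, hσ]
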